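/- Let d ≥ 1 and let G be a simple graph on a countable vertex set V whose vertices can be enumerated v₀, v₁, v₂, … so that every vertex vₙ has at most d neighbors among {v₀, …, v_{n−1}} (i.e. G is d-degenerate with a witnessing ordering). Let g be a function assigning a real number (a squared length) to every edge of G. Then there exists a map f : V → ℝ^d_d such that for every edge {a,b} of G one has ⟨f(a) − f(b), f(a) − f(b)⟩ = g(a,b). -/

import Mathlib

/-- The Minkowski space `ℝ^d_d`. -/
abbrev Mink (d : ℕ) :=
  EuclideanSpace ℝ (Fin d) × EuclideanSpace ℝ (Fin d)

/-- The indefinite bilinear form of signature `(d, d)` on `Mink d`. -/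
noncomputable def mform (d : ℕ) (u v : Mink d) : ℝ :=
  inner ℝ u.1 v.1 - inner ℝ u.2 v.2

open Polynomial in
lemma mink_det_ne (d : ℕ) (s : ℝ) (t : Fin d → ℝ) (ht : Function.Injective t)
    (hts : ∀ i, t i ≠ s) :
    (Matrix.of fun i j : Fin d => s ^ ((j : ℕ) + 1) - t i ^ ((j : ℕ) + 1)).det ≠ 0 := by
  intro h
  obtain ⟨a, ha0, haM⟩ := (Matrix.exists_mulVec_eq_zero_iff).mpr h
  set p : ℝ[X] := ∑ j : Fin d, C (a j) * (C (s ^ ((j : ℕ) + 1)) - X ^ ((j : ℕ) + 1)) with hp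
  have hdeg : p.natDegree ≤ d := by
    refine natDegree_sum_le_of_forall_le _ _ fun j _ => ?_
    calc (C (a j) * (C (s ^ ((j : ℕ) + 1)) - X ^ ((j : ℕ) + 1))).natDegree
        ≤ (C (s ^ ((j : ℕ) + 1)) - X ^ ((j : ℕ) + 1)).natDegree := natDegree_C_mul_le _ _
      _ ≤ max (C (s ^ ((j : ℕ) + 1))).natDegree (X ^ ((j : ℕ) + 1) : ℝ[X]).natDegree :=
          natDegree_sub_le _ _
      _ ≤ d := by
          simp only [natDegree_C, natDegree_X_pow]
          omega
  have hevals : p.eval s = 0 := by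
    simp [hp, eval_finset_sum]
  have hevalt : ∀ i, p.eval (t i) = 0 := by
    intro i
    have := congrFun haM i
    simp only [Matrix.mulVec, dotProduct, Matrix.of_apply, Pi.zero_apply] at this
    simpa [hp, eval_finset_sum, mul_comm] using this
  have hp0 : p = 0 := by
    refine eq_zero_of_natDegree_lt_card_of_eval_eq_zero p
      (f := fun o : Option (Fin d) => o.elim s t) ?_ ?_ ?_
    · rintro (_ | i) (_ | j) hij
      · rfl
      · exact absurd hij.symm (hts j)
      · exact absurd hij (hts i)
      · simp only [Option.elim] at hij
        exact congrArg some (ht hij)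
    · rintro (_ | i)
      · exact hevals
      · exact hevalt i
    · simpa using Nat.lt_succ_of_le hdeg
  apply ha0
  funext j
  have hterm : ∀ k : Fin d, (C (a k) * (C (s ^ ((k : ℕ) + 1)) - X ^ ((k : ℕ) + 1))).coeff
      ((j : ℕ) + 1) = if k = j then -a k else 0 := by
    intro k
    rw [coeff_C_mul, coeff_sub, coeff_C, coeff_X_pow]
    rcases eq_or_ne k j with hkj | hkj
    · subst hkj
      simp
    · have h1 : ¬ ((j : ℕ) + 1 = 0) := by omega
      have h2 : ¬ ((j : ℕ) + 1 = (k : ℕ) + 1) := by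
        simp only [add_left_inj, Fin.val_eq_val]
        exact fun hh => hkj (hh.symm)
      simp [h1, h2, hkj]
      intro hh
      exact absurd (Fin.ext hh).symm hkj
  have : p.coeff ((j : ℕ) + 1) = -a j := by
    rw [hp, finset_sum_coeff]
    simp only [hterm]
    simp
  rw [hp0] at this
  simp only [coeff_zero] at this
  have := this.symm
  simpa using this


lemma mink_pad (n d : ℕ) (S : Finset ℕ) (hS : ∀ m ∈ S, m < n) (hcard : S.card ≤ d) :
    ∃ τ : Fin d → ℕ, Function.Injective τ ∧ (∀ i, τ i ≠ n) ∧ ∀ m ∈ S, ∃ i, τ i = m := by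
  classical
  set l := S.sort (· ≤ ·) with hl
  have hlen : l.length = S.card := S.length_sort _
  have hnd : l.Nodup := S.sort_nodup _
  have hmem : ∀ {m}, m ∈ l ↔ m ∈ S := fun {m} => Finset.mem_sort _
  refine ⟨fun i => if h : (i : ℕ) < l.length then l.get ⟨i, h⟩ else n + 1 + i, ?_, ?_, ?_⟩
  · intro i j hij
    dsimp only at hij
    split_ifs at hij with h1 h2 h2
    · have := congrArg Fin.val (List.nodup_iff_injective_get.mp hnd hij)
      exact Fin.ext this
    · have : l.get ⟨(i : ℕ), h1⟩ ∈ S := hmem.mp (l.get_mem _)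
      have := hS _ this
      omega
    · have : l.get ⟨(j : ℕ), h2⟩ ∈ S := hmem.mp (l.get_mem _)
      have := hS _ this
      omega
    · have : (i : ℕ) = j := by omega
      exact Fin.ext this
  · intro i
    dsimp only
    split_ifs with h1
    · have : l.get ⟨(i : ℕ), h1⟩ ∈ S := hmem.mp (l.get_mem _)
      have := hS _ this
      omega
    · omega
  · intro m hm
    obtain ⟨k, hk⟩ := List.mem_iff_get.mp (hmem.mpr hm)
    have hkd : (k : ℕ) < d := lt_of_lt_of_le (hlen ▸ k.isLt) hcard
    refine ⟨⟨k, hkd⟩, ?_⟩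
    dsimp only
    rw [dif_pos k.isLt]
    exact hk

lemma mink_solve (d n : ℕ) (S : Finset ℕ) (hS : ∀ m ∈ S, m < n) (hcard : S.card ≤ d)
    (t : ℕ → ℝ) :
    ∃ x : Fin d → ℝ, ∀ m ∈ S,
      ∑ j : Fin d, x j * ((n : ℝ) ^ ((j : ℕ) + 1) - (m : ℝ) ^ ((j : ℕ) + 1)) = t m := by
  obtain ⟨τ, hτinj, hτn, hτcov⟩ := mink_pad n d S hS hcard
  set M : Matrix (Fin d) (Fin d) ℝ :=
    Matrix.of fun i j : Fin d => (n : ℝ) ^ ((j : ℕ) + 1) - (τ i : ℝ) ^ ((j : ℕ) + 1) with hM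
  have hdet : M.det ≠ 0 := by
    apply mink_det_ne d (n : ℝ) (fun i => (τ i : ℝ))
    · intro i j hij
      exact hτinj (Nat.cast_injective hij)
    · intro i
      exact fun hh => hτn i (Nat.cast_injective hh)
  have hunit : IsUnit M.det := isUnit_iff_ne_zero.mpr hdet
  refine ⟨M⁻¹.mulVec fun i => t (τ i), ?_⟩
  intro m hm
  obtain ⟨i, hi⟩ := hτcov m hm
  have : M.mulVec (M⁻¹.mulVec fun i => t (τ i)) = fun i => t (τ i) := by
    rw [Matrix.mulVec_mulVec, Matrix.mul_nonsing_inv _ hunit, Matrix.one_mulVec]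
  have h2 := congrFun this i
  simp only [Matrix.mulVec, dotProduct, hM, Matrix.of_apply] at h2
  rw [← hi]
  rw [← h2]
  exact Finset.sum_congr rfl fun j _ => mul_comm _ _


lemma mink_step (d : ℕ) {V : Type*} (G : SimpleGraph V) (e : ℕ ≃ V)
    (hdeg : ∀ n : ℕ, {m : ℕ | m < n ∧ G.Adj (e n) (e m)}.ncard ≤ d)
    (g : V → V → ℝ) (n : ℕ) (xprev : ℕ → Fin d → ℝ) :
    ∃ x : Fin d → ℝ, ∀ m < n, G.Adj (e n) (e m) →
      ∑ j : Fin d, (x j - xprev m j) * ((n : ℝ) ^ ((j : ℕ) + 1) - (m : ℝ) ^ ((j : ℕ) + 1))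
        = g (e n) (e m) := by
  classical
  set S : Finset ℕ := (Finset.range n).filter (fun m => G.Adj (e n) (e m)) with hSdef
  have hS : ∀ m ∈ S, m < n := by
    intro m hm
    simp only [hSdef, Finset.mem_filter, Finset.mem_range] at hm
    exact hm.1
  have hcoe : (S : Set ℕ) = {m : ℕ | m < n ∧ G.Adj (e n) (e m)} := by
    ext m
    simp [hSdef]
  have hcard : S.card ≤ d := by
    have := hdeg n
    rw [← hcoe, Set.ncard_coe_finset] at this
    exact this
  obtain ⟨x, hx⟩ := mink_solve d n S hS hcard
    (fun m => g (e n) (e m) +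
      ∑ j : Fin d, xprev m j * ((n : ℝ) ^ ((j : ℕ) + 1) - (m : ℝ) ^ ((j : ℕ) + 1)))
  refine ⟨x, fun m hm hadj => ?_⟩
  have hmS : m ∈ S := by
    simp [hSdef, hm, hadj]
  have := hx m hmS
  rw [Finset.sum_congr rfl fun j _ => sub_mul (x j) (xprev m j) _, Finset.sum_sub_distrib, this]
  ring

noncomputable def mink_xseq (d : ℕ) {V : Type*} (G : SimpleGraph V) (e : ℕ ≃ V)
    (hdeg : ∀ n : ℕ, {m : ℕ | m < n ∧ G.Adj (e n) (e m)}.ncard ≤ d)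
    (g : V → V → ℝ) : ℕ → Fin d → ℝ
  | n => Classical.choose (mink_step d G e hdeg g n
      (fun m => if _ : m < n then mink_xseq d G e hdeg g m else 0))

lemma mink_xseq_spec (d : ℕ) {V : Type*} (G : SimpleGraph V) (e : ℕ ≃ V)
    (hdeg : ∀ n : ℕ, {m : ℕ | m < n ∧ G.Adj (e n) (e m)}.ncard ≤ d)
    (g : V → V → ℝ) (n m : ℕ) (hm : m < n) (hadj : G.Adj (e n) (e m)) :
    ∑ j : Fin d, (mink_xseq d G e hdeg g n j - mink_xseq d G e hdeg g m j) *
        ((n : ℝ) ^ ((j : ℕ) + 1) - (m : ℝ) ^ ((j : ℕ) + 1)) = g (e n) (e m) := by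
  have h := Classical.choose_spec (mink_step d G e hdeg g n
      (fun m => if _ : m < n then mink_xseq d G e hdeg g m else 0)) m hm hadj
  rw [dif_pos hm] at h
  rw [mink_xseq]
  exact h

/-- Any `d`-degenerate (with witnessing ordering) simple graph on a
countable vertex set, with arbitrary real squared edge lengths `g`, admits a simplicial
isometric map into `ℝ^d_d`. -/
theorem isometric_map_of_degenerate (d : ℕ) (hd : 1 ≤ d) {V : Type*}
    (G : SimpleGraph V) (e : ℕ ≃ V)
    (hdeg : ∀ n : ℕ, {m : ℕ | m < n ∧ G.Adj (e n) (e m)}.ncard ≤ d)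
    (g : V → V → ℝ) (hsymm : ∀ a b : V, g a b = g b a) :
    ∃ f : V → Mink d, ∀ a b : V, G.Adj a b →
      mform d (f a - f b) (f a - f b) = g a b := by
  classical
  set X : ℕ → Fin d → ℝ := mink_xseq d G e hdeg g with hX
  set Y : ℕ → Fin d → ℝ := fun n j => (n : ℝ) ^ ((j : ℕ) + 1) with hY
  set f : V → Mink d := fun v =>
    ((WithLp.equiv 2 (Fin d → ℝ)).symm fun j => (X (e.symm v) j + Y (e.symm v) j) / 2,
     (WithLp.equiv 2 (Fin d → ℝ)).symm fun j => (X (e.symm v) j - Y (e.symm v) j) / 2) with hf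
  refine ⟨f, fun a b hab => ?_⟩
  set N := e.symm a with hN
  set M := e.symm b with hM
  have heN : e N = a := e.apply_symm_apply a
  have heM : e M = b := e.apply_symm_apply b
  have hform : mform d (f a - f b) (f a - f b)
      = ∑ j : Fin d, (X N j - X M j) * (Y N j - Y M j) := by
    simp only [mform, hf, Prod.fst_sub, Prod.snd_sub, PiLp.inner_apply, RCLike.inner_apply,
      conj_trivial, PiLp.sub_apply, WithLp.equiv_symm_apply, PiLp.toLp_apply, ← hN, ← hM]
    rw [← Finset.sum_sub_distrib]
    exact Finset.sum_congr rfl fun j _ => by ring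
  rw [hform]
  have hNM : N ≠ M := fun h => G.ne_of_adj hab (e.symm.injective h)
  rcases hNM.lt_or_gt with h | h
  · -- N < M
    have hadj : G.Adj (e M) (e N) := by rw [heN, heM]; exact hab.symm
    have hs := mink_xseq_spec d G e hdeg g M N h hadj
    rw [heN, heM] at hs
    rw [← hX] at hs
    simp only [hY]
    rw [hsymm a b, ← hs]
    exact Finset.sum_congr rfl fun j _ => by ring
  · -- M < N
    have hadj : G.Adj (e N) (e M) := by rw [heN, heM]; exact hab
    have hs := mink_xseq_spec d G e hdeg g N M h hadj
    rw [heN, heM] at hs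
    rw [← hX] at hs
    simp only [hY]
    exact hs
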